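/- Let J ⊆ S, w̄ ∈ ^JW, σ a word in S of length n, and b ∈ {0,1}^n with φ_{J,σ,b}(w̄) = w̄, and let φ denote the restriction of φ_{σ,b} to the coset W_J w̄ (which maps W_J w̄ into itself). Let w be a fixed point of φ that is minimal in left weak order among all fixed points of φ, let ŵ ≠ w be a fixed point of φ with w <_L ŵ, and let w <_L w_1 <_L ⋯ <_L w_k <_L ŵ be a saturated chain in (W_J w̄, ≤_L). Then every w_i (i = 1,…,k) is a fixed point of φ. In particular, there exists s' ∈ J with ℓ(s'ŵ) < ℓ(ŵ) such that s'ŵ is a fixed point of φ. -/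

import Mathlib

open Polynomial

namespace Paper

variable {B W : Type*} [Group W] {M : CoxeterMatrix B} (cs : CoxeterSystem M W)

/-- The standard parabolic subgroup `W_J` generated by the simple reflections in `J`. -/
def WJ (J : Set B) : Subgroup W :=
  Subgroup.closure (cs.simple '' J)

/-- `w` is a minimal-length representative of its right coset `W_J w`, i.e. `w ∈ ᴶW`. -/
def IsMinRep (J : Set B) (w : W) : Prop :=
  ∀ u ∈ WJ cs J, cs.length w ≤ cs.length (u * w)

open scoped Classical in
/-- `w ·_J s`: equals `w * s` if `w * s ∈ ᴶW`, and `w` otherwise. -/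
noncomputable def mulJ (J : Set B) (w : W) (i : B) : W :=
  if IsMinRep cs J (w * cs.simple i) then w * cs.simple i else w

/-- `φ_{J,s,b}` : for `b = 1` the Bruhat-maximum of `{w ·_J s, w}` (equivalently, the longer
of the two), for `b = 0` the Bruhat-minimum (the shorter of the two). -/
noncomputable def phiJ (J : Set B) (i : B) (b : Bool) (w : W) : W :=
  if b then (if cs.length w ≤ cs.length (mulJ cs J w i) then mulJ cs J w i else w)
  else (if cs.length (mulJ cs J w i) ≤ cs.length w then mulJ cs J w i else w)

/-- `φ_{J,σ|_k,b|_k}(w)`: the composition `φ_{J,s_k,b_k} ∘ ⋯ ∘ φ_{J,s_1,b_1}` over the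
length-`k` prefix of the word, applied to `w`. -/
noncomputable def phiJUpTo (J : Set B) {n : ℕ} (σ : Fin n → B) (b : Fin n → Bool)
    (k : ℕ) (w : W) : W :=
  ((List.ofFn fun i : Fin n => ((σ i : B), (b i : Bool))).take k).foldl
    (fun v p => phiJ cs J p.1 p.2 v) w

/-- `φ_{J,σ,b} = φ_{J,s_n,b_n} ∘ ⋯ ∘ φ_{J,s_1,b_1}`. -/
noncomputable def phiJSeq (J : Set B) {n : ℕ} (σ : Fin n → B) (b : Fin n → Bool) (w : W) : W :=
  phiJUpTo cs J σ b n w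

/-- `φ_{s,b}(w)`: `max(ws, w)` for `b = 1`, `min(ws, w)` for `b = 0` (in Bruhat order;
equivalently by length, since `w` and `ws` are Bruhat-comparable). -/
noncomputable def phi (i : B) (b : Bool) (w : W) : W :=
  if b then (if cs.length w ≤ cs.length (w * cs.simple i) then w * cs.simple i else w)
  else (if cs.length (w * cs.simple i) ≤ cs.length w then w * cs.simple i else w)

/-- `φ_{σ|_k,b|_k}(w)` (the case `J = ∅`). -/
noncomputable def phiUpTo {n : ℕ} (σ : Fin n → B) (b : Fin n → Bool) (k : ℕ) (w : W) : W :=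
  ((List.ofFn fun i : Fin n => ((σ i : B), (b i : Bool))).take k).foldl
    (fun v p => phi cs p.1 p.2 v) w

/-- `φ_{σ,b}(w)` (the case `J = ∅`). -/
noncomputable def phiSeq {n : ℕ} (σ : Fin n → B) (b : Fin n → Bool) (w : W) : W :=
  phiUpTo cs σ b n w

/-- `b` is a `(σ,J)`-good word for `w`: `φ_{σ,b}(w) = w`, and for each left descent
`s ∈ D_L(w) ∩ J` there is a position `i` with
`φ_{σ|_{i-1},b|_{i-1}}(w) · s_i = s · φ_{σ|_{i-1},b|_{i-1}}(w)`. -/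
def Good (J : Set B) {n : ℕ} (σ : Fin n → B) (w : W) (b : Fin n → Bool) : Prop :=
  phiSeq cs σ b w = w ∧
  ∀ i0 ∈ J, cs.length (cs.simple i0 * w) < cs.length w →
    ∃ i : Fin n,
      cs.simple i0 * phiUpTo cs σ b (i : ℕ) w = phiUpTo cs σ b (i : ℕ) w * cs.simple (σ i)

/-- `|b| = b_1 + ⋯ + b_n`. -/
def wt {n : ℕ} (b : Fin n → Bool) : ℕ := ∑ i, if b i then 1 else 0

/-- Left weak order: `w' ≤_L w` iff `w = u * w'` with `ℓ(w) = ℓ(u) + ℓ(w')`. -/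
def leL (w' w : W) : Prop :=
  ∃ u : W, w = u * w' ∧ cs.length w = cs.length u + cs.length w'

end Paper

namespace Paper


section Aux

open CoxeterSystem List

variable {B W : Type*} [Group W] {M : CoxeterMatrix B} (cs : CoxeterSystem M W)

local prefix:100 "ss" => cs.simple
local prefix:100 "ππ" => cs.wordProd
local prefix:100 "ℓℓ" => cs.length

/-! ### The sign permutation representation and the exchange property -/

open scoped Classical

private noncomputable def etaFun (i : B) (p : W × ℤˣ) : W × ℤˣ :=
  (ss i * p.1 * ss i, if p.1 = ss i then -p.2 else p.2)

private lemma simple_conj_eq_iff (i : B) (t : W) :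
    (ss i * t * ss i = ss i) ↔ t = ss i := by
  have h1 : ss i * (ss i * t * ss i) * ss i = t := by
    rw [← mul_assoc, ← mul_assoc, cs.simple_mul_simple_self, one_mul,
      mul_assoc, cs.simple_mul_simple_self, mul_one]
  constructor
  · intro h
    rw [← h1, h, cs.simple_mul_simple_self, one_mul]
  · rintro rfl
    rw [cs.simple_mul_simple_self, one_mul]

private lemma etaFun_invol (i : B) (p : W × ℤˣ) : etaFun cs i (etaFun cs i p) = p := by
  obtain ⟨t, ε⟩ := p
  have h1 : ss i * (ss i * t * ss i) * ss i = t := by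
    rw [← mul_assoc, ← mul_assoc, cs.simple_mul_simple_self, one_mul,
      mul_assoc, cs.simple_mul_simple_self, mul_one]
  unfold etaFun
  simp only [h1, simple_conj_eq_iff]
  by_cases h : t = ss i <;> simp [h]

/-- The generator of the sign representation on `W × ℤˣ`. -/
noncomputable def eta (i : B) : Equiv.Perm (W × ℤˣ) :=
  ⟨etaFun cs i, etaFun cs i, etaFun_invol cs i, etaFun_invol cs i⟩

lemma eta_apply (i : B) (t : W) (ε : ℤˣ) :
    eta cs i (t, ε) = (ss i * t * ss i, if t = ss i then -ε else ε) := rfl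

open scoped Classical in
lemma etaProd_apply (ω : List B) (t : W) (ε : ℤˣ) :
    ((ω.map (eta cs)).prod) (t, ε) =
      (ππ ω * t * (ππ ω)⁻¹, (-1) ^ (List.count t (cs.rightInvSeq ω)) * ε) := by
  induction ω with
  | nil => simp
  | cons i ω ih =>
    rw [List.map_cons, List.prod_cons, Equiv.Perm.mul_apply, ih, eta_apply]
    have hris : cs.rightInvSeq (i :: ω) = ((ππ ω)⁻¹ * ss i * ππ ω) :: cs.rightInvSeq ω := rfl
    have hcond : (ππ ω * t * (ππ ω)⁻¹ = ss i) ↔ (t = (ππ ω)⁻¹ * ss i * ππ ω) := by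
      constructor
      · intro h; rw [← h]; group
      · intro h; rw [h]; group
    have hconj : ss i * (ππ ω * t * (ππ ω)⁻¹) * ss i = ππ (i :: ω) * t * (ππ (i :: ω))⁻¹ := by
      rw [cs.wordProd_cons, mul_inv_rev, cs.inv_simple]; group
    rw [hconj, hris]
    by_cases h : t = (ππ ω)⁻¹ * ss i * ππ ω
    · rw [if_pos (hcond.mpr h), ← h, List.count_cons_self, pow_succ, mul_neg_one, neg_mul]
    · rw [if_neg (fun hc => h (hcond.mp hc)), List.count_cons_of_ne (Ne.symm h)]

/-- `b * q^n = q^{-n} * b` for `q = a * b`, where `a`, `b` are involutions. -/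
private lemma bpow {a b : W} (ha : a * a = 1) (hb : b * b = 1) (n : ℕ) :
    b * (a * b) ^ n = ((a * b) ^ n)⁻¹ * b := by
  have binv : b⁻¹ = b := inv_eq_of_mul_eq_one_right hb
  have ainv : a⁻¹ = a := inv_eq_of_mul_eq_one_right ha
  have hbq : b * (a * b) = (a * b)⁻¹ * b := by
    rw [mul_inv_rev, binv, ainv, ← mul_assoc]
  induction n with
  | zero => simp
  | succ n ih =>
    rw [pow_succ, ← mul_assoc, ih, mul_assoc, hbq,
      show ((a * b) ^ n * (a * b))⁻¹ = (a * b)⁻¹ * ((a * b) ^ n)⁻¹ from mul_inv_rev _ _, ← mul_assoc,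
      show ((a * b) ^ n)⁻¹ * (a * b)⁻¹ = (a * b)⁻¹ * ((a * b) ^ n)⁻¹ from by
        rw [← mul_inv_rev, ← mul_inv_rev, pow_mul_comm'],
      mul_assoc]

private lemma dihedral_head_even {a b : W} (ha : a * a = 1) (hb : b * b = 1) (k : ℕ) :
    ((a * b) ^ k)⁻¹ * b * (a * b) ^ k = ((a * b) ^ (k + k))⁻¹ * b := by
  rw [mul_assoc, bpow ha hb, pow_add,
    show ((a * b) ^ k * (a * b) ^ k)⁻¹ = ((a * b) ^ k)⁻¹ * ((a * b) ^ k)⁻¹ from by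
      rw [mul_inv_rev],
    mul_assoc]

private lemma dihedral_head_odd {a b : W} (ha : a * a = 1) (hb : b * b = 1) (k : ℕ) :
    (b * (a * b) ^ k)⁻¹ * a * (b * (a * b) ^ k) = ((a * b) ^ (k + 1 + k))⁻¹ * b := by
  have binv : b⁻¹ = b := inv_eq_of_mul_eq_one_right hb
  have ainv : a⁻¹ = a := inv_eq_of_mul_eq_one_right ha
  have hba : (a * b)⁻¹ = b * a := by rw [mul_inv_rev, binv, ainv]
  calc (b * (a * b) ^ k)⁻¹ * a * (b * (a * b) ^ k)
      = ((a * b) ^ k)⁻¹ * b⁻¹ * a * (b * (a * b) ^ k) := by rw [mul_inv_rev]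
    _ = ((a * b) ^ k)⁻¹ * ((b * a) * (b * (a * b) ^ k)) := by rw [binv]; group
    _ = ((a * b) ^ k)⁻¹ * ((a * b)⁻¹ * (((a * b) ^ k)⁻¹ * b)) := by rw [hba, bpow ha hb]
    _ = ((a * b) ^ k)⁻¹ * (a * b)⁻¹ * ((a * b) ^ k)⁻¹ * b := by
        rw [← mul_assoc, ← mul_assoc]
    _ = ((a * b) ^ (k + 1 + k))⁻¹ * b := by
        rw [pow_add, pow_add, pow_one]; group

private lemma ris_alternatingWord (i i' : B) (m : ℕ) :
    cs.rightInvSeq (CoxeterSystem.alternatingWord i i' m) =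
      (List.range m).reverse.map (fun q => ((ss i * ss i') ^ q)⁻¹ * ss i') := by
  have ha := cs.simple_mul_simple_self i
  have hb := cs.simple_mul_simple_self i'
  induction m with
  | zero => simp [CoxeterSystem.alternatingWord]
  | succ m ih =>
    rw [CoxeterSystem.alternatingWord_succ']
    have hris : cs.rightInvSeq ((if Even m then i' else i) :: CoxeterSystem.alternatingWord i i' m)
        = ((ππ (CoxeterSystem.alternatingWord i i' m))⁻¹ * ss (if Even m then i' else i)
            * ππ (CoxeterSystem.alternatingWord i i' m))
          :: cs.rightInvSeq (CoxeterSystem.alternatingWord i i' m) := rfl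
    rw [hris, ih, List.range_succ, List.reverse_append]
    simp only [List.reverse_singleton, List.singleton_append, List.map_cons]
    congr 1
    rw [cs.prod_alternatingWord_eq_mul_pow]
    rcases Nat.even_or_odd m with he | ho
    · obtain ⟨k, hk⟩ := he
      rw [if_pos ⟨k, hk⟩, if_pos ⟨k, hk⟩, one_mul]
      have hdiv : m / 2 = k := by omega
      rw [hdiv, hk]
      exact dihedral_head_even ha hb k
    · obtain ⟨k, hk⟩ := ho
      have hne : ¬ Even m := by rw [hk]; simp [parity_simps]
      rw [if_neg hne, if_neg hne]
      have hdiv : m / 2 = k := by omega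
      rw [hdiv, hk, show 2 * k + 1 = k + 1 + k from by omega]
      exact dihedral_head_odd ha hb k

open scoped Classical in
private lemma even_count_ris_braid (i i' : B) (t : W) :
    Even (List.count t (cs.rightInvSeq (CoxeterSystem.alternatingWord i i' (2 * M i i')))) := by
  rw [ris_alternatingWord]
  set f : ℕ → W := fun q => ((ss i * ss i') ^ q)⁻¹ * ss i' with hf
  rw [List.map_reverse, List.count_reverse]
  rw [show 2 * M i i' = M i i' + M i i' from by omega, List.range_add]
  rw [List.map_append, List.count_append, List.map_map]
  have : (List.map (f ∘ (M i i' + ·)) (List.range (M i i'))) = List.map f (List.range (M i i')) := by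
    apply List.map_congr_left
    intro q _
    show f (M i i' + q) = f q
    rw [hf]
    simp only
    rw [pow_add, cs.simple_mul_simple_pow, one_mul]
  rw [this]
  exact ⟨_, rfl⟩

private lemma prodEta_alternating (i i' : B) (m : ℕ) :
    ((CoxeterSystem.alternatingWord i i' (2 * m)).map (eta cs)).prod
      = (eta cs i * eta cs i') ^ m := by
  induction m with
  | zero => simp [CoxeterSystem.alternatingWord]
  | succ m ih =>
    have h1 : 2 * (m + 1) = (2 * m + 1) + 1 := by omega
    have h2 : CoxeterSystem.alternatingWord i i' (2 * (m + 1))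
        = i :: i' :: CoxeterSystem.alternatingWord i i' (2 * m) := by
      rw [h1, CoxeterSystem.alternatingWord_succ', CoxeterSystem.alternatingWord_succ']
      have : ¬ Even (2 * m + 1) := by simp [parity_simps]
      rw [if_neg this, if_pos (by simp)]
    rw [h2, List.map_cons, List.map_cons, List.prod_cons, List.prod_cons, ih,
      pow_succ' (eta cs i * eta cs i') m, mul_assoc]

lemma isLiftable_eta : M.IsLiftable (eta cs) := by
  intro i i'
  have h1 := prodEta_alternating cs i i' (M i i')
  rw [← h1]
  apply Equiv.ext
  rintro ⟨t, ε⟩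
  classical
  rw [etaProd_apply]
  have hπ : ππ (CoxeterSystem.alternatingWord i i' (2 * M i i')) = 1 := by
    rw [cs.prod_alternatingWord_eq_mul_pow, if_pos (by simp [parity_simps]),
      show 2 * M i i' / 2 = M i i' from by omega, one_mul, cs.simple_mul_simple_pow]
  rw [hπ]
  have he := even_count_ris_braid cs i i' t
  rw [Even.neg_one_pow he]
  simp

/-- The sign representation of `W`. -/
noncomputable def etaHom : W →* Equiv.Perm (W × ℤˣ) :=
  cs.lift ⟨eta cs, isLiftable_eta cs⟩

lemma etaHom_wordProd (ω : List B) : etaHom cs (ππ ω) = (ω.map (eta cs)).prod := by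
  induction ω with
  | nil => simp [cs.wordProd_nil]
  | cons i ω ih =>
    rw [cs.wordProd_cons, List.map_cons, List.prod_cons, map_mul, ih]
    congr 1
    exact cs.lift_apply_simple (isLiftable_eta cs) i

private lemma neg_one_pow_inj {a b : ℕ} (h : ((-1 : ℤˣ)) ^ a = (-1) ^ b) : a % 2 = b % 2 := by
  rcases Nat.even_or_odd a with ha | ha <;> rcases Nat.even_or_odd b with hb | hb
  · rw [Nat.even_iff] at ha hb; omega
  · exfalso
    rw [Even.neg_one_pow ha, Odd.neg_one_pow hb] at h
    exact absurd h (by decide)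
  · exfalso
    rw [Odd.neg_one_pow ha, Even.neg_one_pow hb] at h
    exact absurd h (by decide)
  · rw [Nat.odd_iff] at ha hb; omega

open scoped Classical in
lemma count_ris_mod_two {ω ω' : List B} (h : ππ ω = ππ ω') (t : W) :
    List.count t (cs.rightInvSeq ω) % 2 = List.count t (cs.rightInvSeq ω') % 2 := by
  have h0 : ((ω.map (eta cs)).prod) (t, 1) = ((ω'.map (eta cs)).prod) (t, 1) := by
    rw [← etaHom_wordProd, ← etaHom_wordProd, h]
  rw [etaProd_apply, etaProd_apply] at h0
  have := congrArg Prod.snd h0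
  simp only [mul_one] at this
  exact neg_one_pow_inj this

/-- The (right) exchange property. -/
theorem exchange_right {ω : List B} (hω : cs.IsReduced ω) {i : B}
    (h : ℓℓ (ππ ω * ss i) < ℓℓ (ππ ω)) :
    ∃ j < ω.length, ππ ω * ss i = ππ (ω.eraseIdx j) := by
  classical
  have hmem : ss i ∈ cs.rightInvSeq ω := by
    obtain ⟨ω₂, hlen, hw2⟩ := cs.exists_reduced_word (ππ ω * ss i)
    have hred2 : cs.IsReduced ω₂ := hlen
    have hπ : ππ (ω₂.concat i) = ππ ω := by
      rw [cs.wordProd_concat, ← hw2, cs.simple_mul_simple_cancel_right]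
    have hnot : ss i ∉ cs.rightInvSeq ω₂ := by
      intro hm
      have h2 := (cs.isRightInversion_of_mem_rightInvSeq hred2 hm).2
      rw [← hw2, cs.simple_mul_simple_cancel_right] at h2
      omega
    have hcnt2 : List.count (ss i) (cs.rightInvSeq (ω₂.concat i)) = 1 := by
      rw [cs.rightInvSeq_concat, List.concat_eq_append, List.count_append]
      have hz : List.count (ss i) (List.map (⇑(MulAut.conj (ss i))) (cs.rightInvSeq ω₂)) = 0 := by
        rw [List.count_eq_zero]
        intro hm
        obtain ⟨t, ht, heq⟩ := List.mem_map.mp hm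
        apply hnot
        have : t = ss i := by
          have : ss i * t * (ss i)⁻¹ = ss i := heq
          rw [cs.inv_simple] at this
          exact (simple_conj_eq_iff cs i t).mp this
        rwa [this] at ht
      rw [hz]
      simp
    have hpar := count_ris_mod_two cs hπ.symm (ss i)
    rw [hcnt2] at hpar
    have : List.count (ss i) (cs.rightInvSeq ω) ≠ 0 := by omega
    exact List.count_pos_iff.mp (Nat.pos_of_ne_zero this)
  obtain ⟨j, hj, hget⟩ := List.mem_iff_getElem.mp hmem
  have hjlen : j < ω.length := by
    have := cs.length_rightInvSeq ω
    omega
  refine ⟨j, hjlen, ?_⟩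
  have := cs.wordProd_mul_getD_rightInvSeq ω j
  rwa [List.getD_eq_getElem _ 1 hj, hget] at this

/-- The "lifting" lemma: if `ℓ(tx) = ℓ(x) + 1`, `ℓ(xs) = ℓ(x) + 1` but `ℓ(txs) < ℓ(tx)`,
then `tx = xs`. -/
theorem lifting {x : W} {t i : B} (h1 : ℓℓ (ss t * x) = ℓℓ x + 1)
    (h2 : ℓℓ (x * ss i) = ℓℓ x + 1) (h3 : ℓℓ (ss t * x * ss i) < ℓℓ (ss t * x)) :
    ss t * x = x * ss i := by
  obtain ⟨ωx, hlen, hx⟩ := cs.exists_reduced_word x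
  have hred : cs.IsReduced (t :: ωx) := by
    rw [CoxeterSystem.IsReduced, cs.wordProd_cons, ← hx, List.length_cons, (show ωx.length = ℓℓ x by rw [hx]; exact hlen.symm), h1]
  have hπ : ππ (t :: ωx) = ss t * x := by rw [cs.wordProd_cons, ← hx]
  have h3' : ℓℓ (ππ (t :: ωx) * ss i) < ℓℓ (ππ (t :: ωx)) := by rw [hπ]; exact h3
  obtain ⟨j, hj, heq⟩ := exchange_right cs hred h3'
  rw [hπ] at heq
  match j with
  | 0 =>
    rw [show (t :: ωx).eraseIdx 0 = ωx from rfl, ← hx] at heq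
    have := congrArg (fun z => z * ss i) heq
    rwa [cs.simple_mul_simple_cancel_right] at this
  | j + 1 =>
    exfalso
    rw [show (t :: ωx).eraseIdx (j + 1) = t :: ωx.eraseIdx j from rfl, cs.wordProd_cons,
      mul_assoc] at heq
    have heq2 : x * ss i = ππ (ωx.eraseIdx j) := mul_left_cancel heq
    have hle := cs.length_wordProd_le (ωx.eraseIdx j)
    rw [← heq2] at hle
    have hjx : j < ωx.length := by
      simp only [List.length_cons] at hj
      omega
    rw [List.length_eraseIdx] at hle
    rw [if_pos hjx, (show ωx.length = ℓℓ x by rw [hx]; exact hlen.symm)] at hle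
    omega


/-! ### Behaviour of the operators `phi` on left-weak-order covers -/

lemma phi_false_def (i : B) (x : W) :
    phi cs i false x = if ℓℓ (x * ss i) ≤ ℓℓ x then x * ss i else x := by
  simp [phi]

lemma phi_true_def (i : B) (x : W) :
    phi cs i true x = if ℓℓ x ≤ ℓℓ (x * ss i) then x * ss i else x := by
  simp [phi]

lemma phi_step (i : B) (bb : Bool) (x : W) (t : B)
    (hl : ℓℓ (ss t * x) = ℓℓ x + 1) :
    phi cs i bb (ss t * x) = phi cs i bb x ∨
    (phi cs i bb (ss t * x) = ss t * phi cs i bb x ∧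
      ℓℓ (ss t * phi cs i bb x) = ℓℓ (phi cs i bb x) + 1) := by
  have e : ℓℓ ((ss t * x) * ss i) = ℓℓ (ss t * (x * ss i)) := by rw [mul_assoc]
  rcases cs.length_mul_simple x i with hx | hx
  · -- ℓ (x * s i) = ℓ x + 1
    rcases cs.length_mul_simple (ss t * x) i with hy | hy
    · -- ℓ (y * s i) = ℓ y + 1
      cases bb
      · right
        rw [phi_false_def, phi_false_def, if_neg (by omega), if_neg (by omega)]
        exact ⟨rfl, hl⟩
      · right
        rw [phi_true_def, phi_true_def, if_pos (by omega), if_pos (by omega)]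
        refine ⟨by rw [mul_assoc], ?_⟩
        rw [← mul_assoc]
        omega
    · -- ℓ (y * s i) + 1 = ℓ y : the collapsing case, uses the lifting lemma
      have heq : ss t * x = x * ss i := by
        apply lifting cs hl hx
        omega
      cases bb
      · left
        rw [phi_false_def, phi_false_def, if_pos (by omega), if_neg (by omega)]
        rw [heq, cs.simple_mul_simple_cancel_right]
      · left
        rw [phi_true_def, phi_true_def, if_neg (by omega), if_pos (by omega)]
        rw [← heq]
  · -- ℓ (x * s i) + 1 = ℓ x
    have h5 : ℓℓ (ss t * (x * ss i)) = ℓℓ (x * ss i) + 1 := by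
      rcases cs.length_simple_mul (x * ss i) t with h | h
      · exact h
      · exfalso
        rcases cs.length_mul_simple (ss t * x) i with h2 | h2 <;> omega
    have hy : ℓℓ ((ss t * x) * ss i) + 1 = ℓℓ (ss t * x) := by omega
    cases bb
    · right
      rw [phi_false_def, phi_false_def, if_pos (by omega), if_pos (by omega)]
      exact ⟨by rw [mul_assoc], by omega⟩
    · right
      rw [phi_true_def, phi_true_def, if_neg (by omega), if_neg (by omega)]
      exact ⟨rfl, hl⟩

lemma phiUpTo_succ {n : ℕ} (σ : Fin n → B) (b : Fin n → Bool) (m : ℕ) (v : W) :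
    phiUpTo cs σ b (m + 1) v =
      if h : m < n then phi cs (σ ⟨m, h⟩) (b ⟨m, h⟩) (phiUpTo cs σ b m v)
      else phiUpTo cs σ b m v := by
  unfold phiUpTo
  rw [List.take_succ, List.foldl_append]
  by_cases h : m < n
  · rw [dif_pos h]
    rw [List.getElem?_eq_getElem (by simpa using h), List.getElem_ofFn]
    rfl
  · rw [dif_neg h]
    rw [List.getElem?_eq_none (by simpa using Nat.le_of_not_lt h)]
    rfl

lemma phiUpTo_pair {n : ℕ} (σ : Fin n → B) (b : Fin n → Bool) (x : W) (t : B)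
    (hl : ℓℓ (ss t * x) = ℓℓ x + 1) (m : ℕ) :
    phiUpTo cs σ b m (ss t * x) = phiUpTo cs σ b m x ∨
    (phiUpTo cs σ b m (ss t * x) = ss t * phiUpTo cs σ b m x ∧
      ℓℓ (ss t * phiUpTo cs σ b m x) = ℓℓ (phiUpTo cs σ b m x) + 1) := by
  induction m with
  | zero => exact Or.inr ⟨rfl, hl⟩
  | succ m ih =>
    rw [phiUpTo_succ, phiUpTo_succ]
    by_cases h : m < n
    · rw [dif_pos h, dif_pos h]
      rcases ih with he | ⟨h1, h2⟩
      · left; rw [he]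
      · rw [h1]
        exact phi_step cs _ _ _ t h2
    · rw [dif_neg h, dif_neg h]
      exact ih

lemma phiSeq_pair {n : ℕ} (σ : Fin n → B) (b : Fin n → Bool) (x : W) (t : B)
    (hl : ℓℓ (ss t * x) = ℓℓ x + 1) :
    phiSeq cs σ b (ss t * x) = phiSeq cs σ b x ∨
    (phiSeq cs σ b (ss t * x) = ss t * phiSeq cs σ b x ∧
      ℓℓ (ss t * phiSeq cs σ b x) = ℓℓ (phiSeq cs σ b x) + 1) :=
  phiUpTo_pair cs σ b x t hl n

/-! ### Elements of `W_J` of length one -/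

lemma exists_word_of_mem_WJ {J : Set B} {u : W} (hu : u ∈ WJ cs J) :
    ∃ ω : List B, (∀ x ∈ ω, x ∈ J) ∧ u = ππ ω := by
  induction hu using Subgroup.closure_induction with
  | mem x hx =>
    obtain ⟨j, hj, rfl⟩ := hx
    exact ⟨[j], by simpa using hj, (cs.wordProd_singleton j).symm⟩
  | one => exact ⟨[], by simp, by rw [cs.wordProd_nil]⟩
  | mul x y _ _ hx hy =>
    obtain ⟨ω₁, h₁, rfl⟩ := hx
    obtain ⟨ω₂, h₂, rfl⟩ := hy
    refine ⟨ω₁ ++ ω₂, ?_, by rw [cs.wordProd_append]⟩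
    intro z hz
    rcases List.mem_append.mp hz with h | h
    · exact h₁ z h
    · exact h₂ z h
  | inv x _ hx =>
    obtain ⟨ω, h₁, rfl⟩ := hx
    refine ⟨ω.reverse, ?_, by rw [cs.wordProd_reverse]⟩
    intro z hz
    exact h₁ z (List.mem_reverse.mp hz)

private lemma length_one_word_aux {J : Set B} :
    ∀ (N : ℕ) (ω : List B), ω.length ≤ N → (∀ x ∈ ω, x ∈ J) → ℓℓ (ππ ω) = 1 →
      ∃ j ∈ J, ππ ω = ss j := by
  intro N
  induction N with
  | zero =>
    intro ω hN hJ hlen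
    have h0 : ω = [] := List.length_eq_zero_iff.mp (by omega)
    rw [h0, cs.wordProd_nil, cs.length_one] at hlen
    omega
  | succ N ih =>
    intro ω hN hJ hlen
    by_cases hred : cs.IsReduced ω
    · have h1 : ω.length = 1 := by rw [← hred, hlen]
      obtain ⟨j, rfl⟩ := List.length_eq_one_iff.mp h1
      exact ⟨j, hJ j (by simp), cs.wordProd_singleton j⟩
    · classical
      have hex : ∃ k, ¬ cs.IsReduced (ω.take k) := ⟨ω.length, by rwa [List.take_length]⟩
      have hk₀spec : ¬ cs.IsReduced (ω.take (Nat.find hex)) := Nat.find_spec hex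
      have hk₀pos : Nat.find hex ≠ 0 := by
        intro h0
        rw [h0] at hk₀spec
        apply hk₀spec
        rw [List.take_zero, CoxeterSystem.IsReduced, cs.wordProd_nil, cs.length_one]
        rfl
      have hk₀le : Nat.find hex ≤ ω.length := Nat.find_le (by rwa [List.take_length])
      obtain ⟨k, hkk⟩ := Nat.exists_eq_succ_of_ne_zero hk₀pos
      rw [hkk] at hk₀spec hk₀le
      have hkred : cs.IsReduced (ω.take k) := by
        by_contra hcon
        have hfle : Nat.find hex ≤ k := Nat.find_le hcon
        omega
      have hklt : k < ω.length := by omega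
      have htake : ω.take (k + 1) = ω.take k ++ [ω[k]] := by
        rw [List.take_succ, List.getElem?_eq_getElem hklt]
        rfl
      have hlentake : (ω.take k).length = k := by
        rw [List.length_take]
        omega
      have hlenred : ℓℓ (ππ (ω.take k)) = k := by rw [hkred, hlentake]
      have hdesc : ℓℓ (ππ (ω.take k) * ss (ω[k])) + 1 = ℓℓ (ππ (ω.take k)) := by
        have hne : ℓℓ (ππ (ω.take (k + 1))) ≠ k + 1 := by
          intro hcon
          apply hk₀spec
          rw [CoxeterSystem.IsReduced, hcon, List.length_take]
          omega
        rw [htake, cs.wordProd_append, cs.wordProd_singleton] at hne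
        rcases cs.length_mul_simple (ππ (ω.take k)) (ω[k]) with h | h <;> omega
      obtain ⟨m, hm, hmeq⟩ := exchange_right cs hkred (i := ω[k]) (by omega)
      set ω' := (ω.take k).eraseIdx m ++ ω.drop (k + 1) with hω'
      have hπ : ππ ω' = ππ ω := by
        rw [hω', cs.wordProd_append, ← hmeq]
        conv_rhs => rw [← List.take_append_drop (k + 1) ω]
        rw [cs.wordProd_append, htake, cs.wordProd_append, cs.wordProd_singleton]
      have hJ' : ∀ x ∈ ω', x ∈ J := by
        intro x hx
        rcases List.mem_append.mp hx with h | h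
        · exact hJ x ((List.take_sublist k ω).subset ((List.eraseIdx_sublist _ m).subset h))
        · exact hJ x ((List.drop_sublist (k + 1) ω).subset h)
      have hlen' : ω'.length ≤ N := by
        rw [hω', List.length_append, List.length_eraseIdx, List.length_drop]
        rw [if_pos (by omega)]
        rw [hlentake]
        omega
      obtain ⟨j, hj, hjeq⟩ := ih ω' hlen' hJ' (by rw [hπ]; exact hlen)
      exact ⟨j, hj, by rw [← hπ]; exact hjeq⟩

lemma exists_simple_of_mem_WJ {J : Set B} {u : W} (hu : u ∈ WJ cs J) (hlen : ℓℓ u = 1) :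
    ∃ j ∈ J, u = ss j := by
  obtain ⟨ω, hJ, rfl⟩ := exists_word_of_mem_WJ cs hu
  exact length_one_word_aux cs ω.length ω le_rfl hJ hlen


end Aux



/-- Let `J ⊆ S`, `w̄ ∈ ᴶW`, `σ` a word of length `n`, `b ∈ {0,1}^n` with
`φ_{J,σ,b}(w̄) = w̄`, and let `φ = φ_{σ,b}` restricted to the coset `W_J w̄`. Let `w` be a
fixed point of `φ` minimal in left weak order among all fixed points in the coset, let
`ŵ ≠ w` be a fixed point with `w <_L ŵ`, and let `w <_L w_1 <_L ⋯ <_L w_k <_L ŵ` be a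
saturated chain in `(W_J w̄, ≤_L)` (encoded by `c : ℕ → W` with `c 0 = w`,
`c (k+1) = ŵ`, covering steps). Then every `w_i` is a fixed point of `φ`; in particular
there is `s' ∈ J` with `ℓ(s'ŵ) < ℓ(ŵ)` such that `s'ŵ` is a fixed point of `φ`. -/
theorem chain_of_fixed_points {B W : Type*} [Group W] {M : CoxeterMatrix B}
    (cs : CoxeterSystem M W) (J : Set B) {n : ℕ} (σ : Fin n → B) (b : Fin n → Bool)
    (wbar : W) (hbar : IsMinRep cs J wbar) (hfix : phiJSeq cs J σ b wbar = wbar)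
    (w what : W) (k : ℕ) (c : ℕ → W)
    (hwmem : ∃ u ∈ WJ cs J, w = u * wbar)
    (hwfix : phiSeq cs σ b w = w)
    (hwmin : ∀ v : W, (∃ u ∈ WJ cs J, v = u * wbar) → phiSeq cs σ b v = v →
      leL cs v w → v = w)
    (hhatmem : ∃ u ∈ WJ cs J, what = u * wbar)
    (hhatfix : phiSeq cs σ b what = what)
    (hne : w ≠ what) (hlt : leL cs w what)
    (hc0 : c 0 = w) (hclast : c (k + 1) = what)
    (hcmem : ∀ i ≤ k + 1, ∃ u ∈ WJ cs J, c i = u * wbar)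
    (hchain : ∀ i ≤ k, leL cs (c i) (c (i + 1)) ∧
      cs.length (c (i + 1)) = cs.length (c i) + 1) :
    (∀ i, 1 ≤ i → i ≤ k → phiSeq cs σ b (c i) = c i) ∧
    ∃ i' ∈ J, cs.length (cs.simple i' * what) < cs.length what ∧
      phiSeq cs σ b (cs.simple i' * what) = cs.simple i' * what := by
  classical
  have hwhat : cs.length what = cs.length w + (k + 1) := by
    have hlenc : ∀ i, i ≤ k + 1 → cs.length (c i) = cs.length w + i := by
      intro i
      induction i with
      | zero => intro _; rw [hc0]; omega
      | succ m ihm =>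
        intro hm
        rw [(hchain m (by omega)).2, ihm (by omega)]
        omega
    rw [← hclast]
    exact hlenc (k + 1) le_rfl
  have hlenc : ∀ i, i ≤ k + 1 → cs.length (c i) = cs.length w + i := by
    intro i
    induction i with
    | zero => intro _; rw [hc0]; omega
    | succ m ihm =>
      intro hm
      rw [(hchain m (by omega)).2, ihm (by omega)]
      omega
  have hstep : ∀ i, i ≤ k → ∃ t : B, c (i + 1) = cs.simple t * c i ∧
      cs.length (cs.simple t * c i) = cs.length (c i) + 1 := by
    intro i hi
    obtain ⟨u, hu1, hu2⟩ := (hchain i hi).1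
    have hul : cs.length u = 1 := by
      have := (hchain i hi).2
      omega
    obtain ⟨t, ht⟩ := cs.length_eq_one_iff.mp hul
    refine ⟨t, by rw [← ht]; exact hu1, ?_⟩
    rw [← ht, ← hu1]
    exact (hchain i hi).2
  have hA : ∀ i, i ≤ k + 1 → cs.length (phiSeq cs σ b (c i)) ≤ cs.length w + i := by
    intro i
    induction i with
    | zero => intro _; rw [hc0, hwfix]; omega
    | succ m ihm =>
      intro hm
      obtain ⟨t, hct, hctl⟩ := hstep m (by omega)
      have hprev := ihm (by omega)
      rcases phiSeq_pair cs σ b (c m) t hctl with he | ⟨h1, h2⟩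
      · rw [hct, he]; omega
      · rw [hct, h1]; omega
  have hB : ∀ d i, i + d = k + 1 →
      cs.length w + (k + 1) ≤ cs.length (phiSeq cs σ b (c i)) + d := by
    intro d
    induction d with
    | zero =>
      intro i hi
      have hik : i = k + 1 := by omega
      subst hik
      rw [hclast, hhatfix, hwhat]
      omega
    | succ d ihd =>
      intro i hi
      obtain ⟨t, hct, hctl⟩ := hstep i (by omega)
      have hstepineq : cs.length (phiSeq cs σ b (c (i + 1)))
          ≤ cs.length (phiSeq cs σ b (c i)) + 1 := by
        rcases phiSeq_pair cs σ b (c i) t hctl with he | ⟨h1, h2⟩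
        · rw [hct, he]; omega
        · rw [hct, h1]; omega
      have := ihd (i + 1) (by omega)
      omega
  have hg : ∀ i, i ≤ k + 1 → cs.length (phiSeq cs σ b (c i)) = cs.length w + i := by
    intro i hi
    have h1 := hA i hi
    have h2 := hB (k + 1 - i) i (by omega)
    omega
  have hfixall : ∀ d i, i + d = k + 1 → phiSeq cs σ b (c i) = c i := by
    intro d
    induction d with
    | zero =>
      intro i hi
      have hik : i = k + 1 := by omega
      subst hik
      rw [hclast]
      exact hhatfix
    | succ d ihd =>
      intro i hi
      obtain ⟨t, hct, hctl⟩ := hstep i (by omega)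
      rcases phiSeq_pair cs σ b (c i) t hctl with he | ⟨h1, h2⟩
      · exfalso
        have e1 := hg i (by omega)
        have e2 := hg (i + 1) (by omega)
        rw [hct, he] at e2
        omega
      · have hi1 : phiSeq cs σ b (c (i + 1)) = c (i + 1) := ihd (i + 1) (by omega)
        rw [hct, h1] at hi1
        exact mul_left_cancel hi1
  constructor
  · intro i h1 h2
    exact hfixall (k + 1 - i) i (by omega)
  · obtain ⟨t, hct, hctl⟩ := hstep k le_rfl
    obtain ⟨u1, hu1J, hcu1⟩ := hcmem k (by omega)
    obtain ⟨u2, hu2J, hcu2⟩ := hcmem (k + 1) le_rfl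
    have hst : cs.simple t = u2 * u1⁻¹ := by
      have h0 : c (k + 1) * (c k)⁻¹ = cs.simple t := by rw [hct]; group
      rw [← h0, hcu1, hcu2]
      group
    have hstW : cs.simple t ∈ WJ cs J := by
      rw [hst]
      exact Subgroup.mul_mem _ hu2J (Subgroup.inv_mem _ hu1J)
    obtain ⟨j, hjJ, hjeq⟩ := exists_simple_of_mem_WJ cs hstW (cs.length_simple t)
    have h1 : cs.simple j * what = c k := by
      rw [← hclast, hct, ← hjeq, cs.simple_mul_simple_cancel_left]
    refine ⟨j, hjJ, ?_, ?_⟩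
    · rw [h1]
      have := hlenc k (by omega)
      omega
    · rw [h1]
      exact hfixall 1 k (by omega)


end Paper
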